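/- Define F(a, Y) = ∑_{n ∈ ℤ} (π(n - Y)⁵ - (5/a)(n - Y)³ - (1/4)(n - Y)) · exp(-aπ(n - Y)²). Then for all a ∈ [2, 24] and all Y ∈ [1/20, 2/5], F(a, Y) ≥ (1/100)·exp(-aπY²) > 0. -/

import Mathlib

open Real
set_option maxHeartbeats 1600000

-- exp(-r) ≤ q helper
lemma exp_neg_le_q (r q : ℝ) (n : ℕ) (hr : 0 ≤ r) (hq : 0 < q)
    (h : 1 ≤ q * (1 + r / n) ^ n) : Real.exp (-r) ≤ q := by
  have hP : (1 + r / n) ^ n ≤ Real.exp r := by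
    rcases Nat.eq_zero_or_pos n with hn | hn
    · simp [hn]; linarith [Real.add_one_le_exp r, hr]
    · have h1 : (1 + r / n) ≤ Real.exp (r / n) := by
        have := Real.add_one_le_exp (r / n); linarith
      have h0 : (0:ℝ) ≤ 1 + r / n := by positivity
      calc (1 + r / n) ^ n ≤ (Real.exp (r / n)) ^ n := pow_le_pow_left₀ h0 h1 n
        _ = Real.exp (n * (r / n)) := (Real.exp_nat_mul _ n).symm
        _ = Real.exp r := by rw [mul_div_cancel₀]; positivity
  have hPpos : (0:ℝ) < (1 + r / n) ^ n := by positivity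
  rw [Real.exp_neg]
  rw [inv_le_iff_one_le_mul₀ (Real.exp_pos r)]
  calc (1:ℝ) ≤ q * (1 + r / n) ^ n := h
    _ ≤ q * Real.exp r := by nlinarith
-- 8 s^5 ≤ exp (3 s²)
lemma L0 (s : ℝ) (hs : 2 ≤ s) : 8 * s ^ 5 ≤ Real.exp (3 * s ^ 2) := by
  have h1 : s ^ 2 / 2 + 1 ≤ Real.exp (s ^ 2 / 2) := Real.add_one_le_exp _
  have h0 : (0:ℝ) ≤ s ^ 2 / 2 + 1 := by positivity
  have h2 : (s ^ 2 / 2 + 1) ^ 6 ≤ (Real.exp (s ^ 2 / 2)) ^ 6 := pow_le_pow_left₀ h0 h1 6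
  have h3 : (Real.exp (s ^ 2 / 2)) ^ 6 = Real.exp (3 * s ^ 2) := by
    rw [← Real.exp_nat_mul]; ring_nf
  have hs0 : (0:ℝ) < s := by linarith
  have e1 : 2 * s ^ 5 ≤ s ^ 6 := by nlinarith [pow_pos hs0 5]
  have e2 : (s ^ 2 / 2 + 1) ^ 6 ≥ 20 * (s^2/2)^3 + 15 * (s^2/2)^4 := by
    nlinarith [pow_pos hs0 2, pow_pos hs0 4, pow_pos hs0 6, pow_pos hs0 8, pow_pos hs0 10, pow_pos hs0 12, sq_nonneg (s^2/2)]
  have e3 : 15 * (s^2/2)^4 ≥ 15/4 * s ^ 6 := by nlinarith [pow_pos hs0 6]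
  have h4 : 8 * s ^ 5 ≤ (s ^ 2 / 2 + 1) ^ 6 := by nlinarith [pow_pos hs0 5, pow_pos hs0 6]
  linarith
-- main term bound
lemma L_tb (s E w q : ℝ) (hs : 2 ≤ s) (hq0 : 0 ≤ q) (hq : q ≤ 5/2)
    (hE : 3 * s ^ 2 + w ≤ E) :
    (Real.pi * s ^ 5 + q * s ^ 3 + s / 4) * Real.exp (-E) ≤ Real.exp (-w) := by
  have hs0 : (0:ℝ) < s := lt_of_lt_of_le two_pos hs
  have hP : Real.pi * s ^ 5 + q * s ^ 3 + s / 4 ≤ 8 * s ^ 5 := by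
    have hp := Real.pi_lt_d6
    have h1 : q * s ^ 3 ≤ (5/2) * s ^ 3 := by nlinarith [pow_pos hs0 3]
    nlinarith [pow_pos hs0 5, pow_pos hs0 3, pow_pos hs0 1, sq_nonneg s,
      mul_le_mul_of_nonneg_right (show s^2 ≥ 4 by nlinarith) (le_of_lt (pow_pos hs0 3))]
  have h5 := L0 s hs
  have hEpos := Real.exp_pos (-E)
  calc (Real.pi * s ^ 5 + q * s ^ 3 + s / 4) * Real.exp (-E)
      ≤ Real.exp (3 * s ^ 2) * Real.exp (-E) := by nlinarith
    _ = Real.exp (3 * s ^ 2 - E) := by rw [← Real.exp_add]; ring_nf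
    _ ≤ Real.exp (-w) := by apply Real.exp_le_exp.mpr; linarith
lemma core_box (a Y a1 a2 Y1 Y2 m1 m2 r1 r2 q1 q2 : ℝ)
    (ha1 : a1 ≤ a) (ha2 : a ≤ a2) (hY1 : Y1 ≤ Y) (hY2 : Y ≤ Y2)
    (hb1 : 2 ≤ a1) (hbY1 : 1/20 ≤ Y1) (hbY2 : Y2 ≤ 2/5)
    (hm1 : m1 ≤ 0) (hm2 : m2 ≤ 0)
    (hm1' : m1 ≤ 3.141592*(1-Y2)^5 - (5/a1)*(1-Y1)^3 - (1-Y1)/4)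
    (hm2' : m2 ≤ -(3.141593*(1+Y2)^5) + (5/a2)*(1+Y1)^3 + (1+Y1)/4)
    (hr1 : 0 ≤ r1) (hr1' : r1 ≤ a1*3.141592*(1-2*Y2))
    (hr2 : 0 ≤ r2) (hr2' : r2 ≤ a1*3.141592*(1+2*Y1))
    (hq1 : Real.exp (-r1) ≤ q1) (hq2 : Real.exp (-r2) ≤ q2)
    (hfin : 0.0101 ≤ Y1/4 + (5/a2)*Y1^3 - 3.141593*Y2^5 + m1*q1 + m2*q2) :
    0.0101 ≤ (Y/4 + (5/a)*Y^3 - Real.pi*Y^5)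
      + (Real.pi*(1-Y)^5 - (5/a)*(1-Y)^3 - (1-Y)/4) * Real.exp (-(a*Real.pi*(1-2*Y)))
      + (-(Real.pi*(1+Y)^5) + (5/a)*(1+Y)^3 + (1+Y)/4) * Real.exp (-(a*Real.pi*(1+2*Y))) := by
  have hπ1 : (3.141592:ℝ) < Real.pi := Real.pi_gt_d6
  have hπ2 : Real.pi < 3.141593 := Real.pi_lt_d6
  have ha0 : (0:ℝ) < a1 := by linarith
  have ha0' : (0:ℝ) < a := by linarith
  have ha0'' : (0:ℝ) < a2 := by linarith
  have hY0 : (0:ℝ) < Y1 := by linarith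
  have hY0' : (0:ℝ) < Y := by linarith
  have hY25 : Y ≤ 2/5 := by linarith
  have hY120 : 1/20 ≤ Y := by linarith
  -- exp bounds
  have hE1 : Real.exp (-(a*Real.pi*(1-2*Y))) ≤ q1 := by
    refine le_trans (Real.exp_le_exp.mpr ?_) hq1
    have h12 : (0:ℝ) ≤ 1-2*Y2 := by linarith
    have hap : a1*3.141592 ≤ a*Real.pi :=
      mul_le_mul ha1 hπ1.le (by norm_num) (le_of_lt ha0')
    have : a1*3.141592*(1-2*Y2) ≤ a*Real.pi*(1-2*Y) :=
      mul_le_mul hap (by linarith) h12 (by positivity)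
    linarith
  have hE2 : Real.exp (-(a*Real.pi*(1+2*Y))) ≤ q2 := by
    refine le_trans (Real.exp_le_exp.mpr ?_) hq2
    have hap : a1*3.141592 ≤ a*Real.pi :=
      mul_le_mul ha1 hπ1.le (by norm_num) (le_of_lt ha0')
    have : a1*3.141592*(1+2*Y1) ≤ a*Real.pi*(1+2*Y) :=
      mul_le_mul hap (by linarith) (by linarith) (by positivity)
    linarith
  have hE1p : (0:ℝ) < Real.exp (-(a*Real.pi*(1-2*Y))) := Real.exp_pos _
  have hE2p : (0:ℝ) < Real.exp (-(a*Real.pi*(1+2*Y))) := Real.exp_pos _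
  -- f1 lower bound
  have hf1 : m1 ≤ Real.pi*(1-Y)^5 - (5/a)*(1-Y)^3 - (1-Y)/4 := by
    have p1 : (3.141592:ℝ)*(1-Y2)^5 ≤ Real.pi*(1-Y)^5 := by
      have h1 : (0:ℝ) ≤ 1-Y2 := by linarith
      have h2 : (1-Y2:ℝ) ≤ 1-Y := by linarith
      exact mul_le_mul hπ1.le (pow_le_pow_left₀ h1 h2 5) (pow_nonneg h1 5) Real.pi_pos.le
    have p2 : (5/a)*(1-Y)^3 ≤ (5/a1)*(1-Y1)^3 := by
      have h1 : (0:ℝ) ≤ 1-Y := by linarith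
      have h2 : (1-Y:ℝ) ≤ 1-Y1 := by linarith
      have h4 : (5:ℝ)/a ≤ 5/a1 := by
        apply div_le_div_of_nonneg_left (by norm_num) ha0 ha1
      exact mul_le_mul h4 (pow_le_pow_left₀ h1 h2 3) (pow_nonneg h1 3) (by positivity)
    have p3 : (1-Y:ℝ)/4 ≤ (1-Y1)/4 := by linarith
    linarith
  -- fm1 lower bound
  have hf2 : m2 ≤ -(Real.pi*(1+Y)^5) + (5/a)*(1+Y)^3 + (1+Y)/4 := by
    have p1 : Real.pi*(1+Y)^5 ≤ 3.141593*(1+Y2)^5 := by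
      have h1 : (0:ℝ) ≤ 1+Y := by linarith
      have h2 : (1+Y:ℝ) ≤ 1+Y2 := by linarith
      exact mul_le_mul hπ2.le (pow_le_pow_left₀ h1 h2 5) (pow_nonneg h1 5) (by norm_num)
    have p2 : (5/a2)*(1+Y1)^3 ≤ (5/a)*(1+Y)^3 := by
      have h1 : (0:ℝ) ≤ 1+Y1 := by linarith
      have h2 : (1+Y1:ℝ) ≤ 1+Y := by linarith
      have h4 : (5:ℝ)/a2 ≤ 5/a := by
        apply div_le_div_of_nonneg_left (by norm_num) ha0' ha2
      exact mul_le_mul h4 (pow_le_pow_left₀ h1 h2 3) (pow_nonneg h1 3) (by positivity)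
    have p3 : (1+Y1:ℝ)/4 ≤ (1+Y)/4 := by linarith
    linarith
  -- term bounds
  have t1 : m1 * q1 ≤ (Real.pi*(1-Y)^5 - (5/a)*(1-Y)^3 - (1-Y)/4) * Real.exp (-(a*Real.pi*(1-2*Y))) := by
    calc m1 * q1 ≤ m1 * Real.exp (-(a*Real.pi*(1-2*Y))) := mul_le_mul_of_nonpos_left hE1 hm1
      _ ≤ (Real.pi*(1-Y)^5 - (5/a)*(1-Y)^3 - (1-Y)/4) * Real.exp (-(a*Real.pi*(1-2*Y))) :=
        mul_le_mul_of_nonneg_right hf1 hE1p.le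
  have t2 : m2 * q2 ≤ (-(Real.pi*(1+Y)^5) + (5/a)*(1+Y)^3 + (1+Y)/4) * Real.exp (-(a*Real.pi*(1+2*Y))) := by
    calc m2 * q2 ≤ m2 * Real.exp (-(a*Real.pi*(1+2*Y))) := mul_le_mul_of_nonpos_left hE2 hm2
      _ ≤ (-(Real.pi*(1+Y)^5) + (5/a)*(1+Y)^3 + (1+Y)/4) * Real.exp (-(a*Real.pi*(1+2*Y))) :=
        mul_le_mul_of_nonneg_right hf2 hE2p.le
  -- P0 bound
  have t0 : Y1/4 + (5/a2)*Y1^3 - 3.141593*Y2^5 ≤ Y/4 + (5/a)*Y^3 - Real.pi*Y^5 := by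
    have p1 : Real.pi*Y^5 ≤ 3.141593*Y2^5 := by
      have h1 : (0:ℝ) ≤ Y := le_of_lt hY0'
      exact mul_le_mul hπ2.le (pow_le_pow_left₀ h1 hY2 5) (pow_nonneg h1 5) (by norm_num)
    have p2 : (5/a2)*Y1^3 ≤ (5/a)*Y^3 := by
      have h1 : (0:ℝ) ≤ Y1 := le_of_lt hY0
      have h4 : (5:ℝ)/a2 ≤ 5/a := by
        apply div_le_div_of_nonneg_left (by norm_num) ha0' ha2
      exact mul_le_mul h4 (pow_le_pow_left₀ h1 hY1 3) (pow_nonneg h1 3) (by positivity)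
    linarith
  linarith
theorem core_ineq (a Y : ℝ) (ha1 : 2 ≤ a) (ha2 : a ≤ 24) (hY1 : 1/20 ≤ Y) (hY2 : Y ≤ 2/5) :
    (0.0101:ℝ) ≤ (Y/4 + (5/a)*Y^3 - Real.pi*Y^5)
      + (Real.pi*(1-Y)^5 - (5/a)*(1-Y)^3 - (1-Y)/4) * Real.exp (-(a*Real.pi*(1-2*Y)))
      + (-(Real.pi*(1+Y)^5) + (5/a)*(1+Y)^3 + (1+Y)/4) * Real.exp (-(a*Real.pi*(1+2*Y))) := by
  rcases le_or_gt a (13) with hc1 | hc1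
  · -- a ≤ (13)
    rcases le_or_gt a (15/2) with hc2 | hc2
    · -- a ≤ (15/2)
      rcases le_or_gt a (19/4) with hc3 | hc3
      · -- a ≤ (19/4)
        rcases le_or_gt a (169/50) with hc4 | hc4
        · -- a ≤ (169/50)
          rcases le_or_gt Y (9/40) with hc5 | hc5
          · -- Y ≤ (9/40)
            rcases le_or_gt a (269/100) with hc6 | hc6
            · -- a ≤ (269/100)
              rcases le_or_gt Y (69/500) with hc7 | hc7
              · -- Y ≤ (69/500)
                rcases le_or_gt a (47/20) with hc8 | hc8
                · -- a ≤ (47/20)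
                  rcases le_or_gt Y (47/500) with hc9 | hc9
                  · -- Y ≤ (47/500)
                    rcases le_or_gt a (217/100) with hc10 | hc10
                    · -- a ≤ (217/100)
                      rcases le_or_gt Y (9/125) with hc11 | hc11
                      · -- Y ≤ (9/125)
                        exact core_box a Y (2) (217/100) (1/20) (9/125) (-13352561358326391/61035156250000000) (-179481525423765299/118255615234375000) (42018793/7812500) (4319689/625000) (515144887/100000000000) (50983197/50000000000) (by linarith) (by linarith) (by linarith) (by linarith) (by norm_num) (by norm_num) (by norm_num) (by norm_num) (by norm_num) (by norm_num) (by norm_num) (by norm_num) (by norm_num) (by norm_num) (by norm_num) (exp_neg_le_q _ _ 128 (by norm_num) (by norm_num) (by norm_num)) (exp_neg_le_q _ _ 1024 (by norm_num) (by norm_num) (by rw [show (1024:ℕ) = 32*32 by norm_num, pow_mul]; norm_num)) (by norm_num)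
                      · have hc11' : (9/125) ≤ Y := le_of_lt hc11
                        exact core_box a Y (2) (217/100) (9/125) (47/500) (-1219540118374856393/3906250000000000000) (-12318401381057957927267/6781250000000000000000) (79717897/15625000) (56155957/7812500) (966058923/50000000000) (27506689/25000000000) (by linarith) (by linarith) (by linarith) (by linarith) (by norm_num) (by norm_num) (by norm_num) (by norm_num) (by norm_num) (by norm_num) (by norm_num) (by norm_num) (by norm_num) (by norm_num) (by norm_num) (exp_neg_le_q _ _ 8 (by norm_num) (by norm_num) (by norm_num)) (exp_neg_le_q _ _ 64 (by norm_num) (by norm_num) (by norm_num)) (by norm_num)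
                    · have hc10' : (217/100) ≤ a := le_of_lt hc10
                      exact core_box a Y (217/100) (47/20) (1/20) (47/500) (-250290701937343837281/847656250000000000000) (-3227642713869695956597/1468750000000000000000) (17298783649/3125000000) (937372513/125000000) (221522419/50000000000) (7307419/12500000000) (by linarith) (by linarith) (by linarith) (by linarith) (by norm_num) (by norm_num) (by norm_num) (by norm_num) (by norm_num) (by norm_num) (by norm_num) (by norm_num) (by norm_num) (by norm_num) (by norm_num) (exp_neg_le_q _ _ 128 (by norm_num) (by norm_num) (by norm_num)) (exp_neg_le_q _ _ 512 (by norm_num) (by norm_num) (by rw [show (512:ℕ) = 16*32 by norm_num, pow_mul]; norm_num)) (by norm_num)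
                  · have hc9' : (47/500) ≤ Y := le_of_lt hc9
                    exact core_box a Y (2) (47/20) (47/500) (69/500) (-2306792598025273451/3906250000000000000) (-4313230824684665028479/1468750000000000000000) (71078519/15625000) (116631603/15625000) (364997691/20000000000) (121959381/100000000000) (by linarith) (by linarith) (by linarith) (by linarith) (by norm_num) (by norm_num) (by norm_num) (by norm_num) (by norm_num) (by norm_num) (by norm_num) (by norm_num) (by norm_num) (by norm_num) (by norm_num) (exp_neg_le_q _ _ 16 (by norm_num) (by norm_num) (by norm_num)) (exp_neg_le_q _ _ 32 (by norm_num) (by norm_num) (by norm_num)) (by norm_num)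
                · have hc8' : (47/20) ≤ a := le_of_lt hc8
                  rcases le_or_gt Y (47/500) with hc9 | hc9
                  · -- Y ≤ (47/500)
                    exact core_box a Y (47/20) (269/100) (1/20) (47/500) (-26429700563618250471/183593750000000000000) (-21090075452786132177119/8406250000000000000000) (3746741159/625000000) (203025383/25000000) (228044621/20000000000) (19029313/50000000000) (by linarith) (by linarith) (by linarith) (by linarith) (by norm_num) (by norm_num) (by norm_num) (by norm_num) (by norm_num) (by norm_num) (by norm_num) (by norm_num) (by norm_num) (by norm_num) (by norm_num) (exp_neg_le_q _ _ 8 (by norm_num) (by norm_num) (by norm_num)) (exp_neg_le_q _ _ 128 (by norm_num) (by norm_num) (by norm_num)) (by norm_num)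
                  · have hc9' : (47/500) ≤ Y := le_of_lt hc9
                    exact core_box a Y (47/20) (269/100) (47/500) (69/500) (-57581928747812852197/183593750000000000000) (-27646304604046274311933/8406250000000000000000) (3340690393/625000000) (5481685341/625000000) (1667800237/100000000000) (134054407/50000000000) (by linarith) (by linarith) (by linarith) (by linarith) (by norm_num) (by norm_num) (by norm_num) (by norm_num) (by norm_num) (by norm_num) (by norm_num) (by norm_num) (by norm_num) (by norm_num) (by norm_num) (exp_neg_le_q _ _ 8 (by norm_num) (by norm_num) (by norm_num)) (exp_neg_le_q _ _ 8 (by norm_num) (by norm_num) (by norm_num)) (by norm_num)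
              · have hc7' : (69/500) ≤ Y := le_of_lt hc7
                rcases le_or_gt a (47/20) with hc8 | hc8
                · -- a ≤ (47/20)
                  rcases le_or_gt Y (91/500) with hc9 | hc9
                  · -- Y ≤ (91/500)
                    exact core_box a Y (2) (47/20) (69/500) (91/500) (-2602270302416638749/3906250000000000000) (-5622609049646661015321/1468750000000000000000) (62439141/15625000) (125270981/15625000) (3911990773/100000000000) (78136759/100000000000) (by linarith) (by linarith) (by linarith) (by linarith) (by norm_num) (by norm_num) (by norm_num) (by norm_num) (by norm_num) (by norm_num) (by norm_num) (by norm_num) (by norm_num) (by norm_num) (by norm_num) (exp_neg_le_q _ _ 8 (by norm_num) (by norm_num) (by norm_num)) (exp_neg_le_q _ _ 32 (by norm_num) (by norm_num) (by norm_num)) (by norm_num)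
                  · have hc9' : (91/500) ≤ Y := le_of_lt hc9
                    exact core_box a Y (2) (47/20) (91/500) (9/40) (-8889950855451/12800000000000) (-23376322235467879/4812800000000000) (4319689/1250000) (133910359/15625000) (45250283/800000000) (6534959/6250000000) (by linarith) (by linarith) (by linarith) (by linarith) (by norm_num) (by norm_num) (by norm_num) (by norm_num) (by norm_num) (by norm_num) (by norm_num) (by norm_num) (by norm_num) (by norm_num) (by norm_num) (exp_neg_le_q _ _ 8 (by norm_num) (by norm_num) (by norm_num)) (exp_neg_le_q _ _ 16 (by norm_num) (by norm_num) (by norm_num)) (by norm_num)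
                · have hc8' : (47/20) ≤ a := le_of_lt hc8
                  exact core_box a Y (47/20) (269/100) (69/500) (9/40) (-421085796318197/601600000000000) (-155423350380215733/27545600000000000) (203025383/50000000) (5887736107/625000000) (1873981027/50000000000) (15249479/100000000000) (by linarith) (by linarith) (by linarith) (by linarith) (by norm_num) (by norm_num) (by norm_num) (by norm_num) (by norm_num) (by norm_num) (by norm_num) (by norm_num) (by norm_num) (by norm_num) (by norm_num) (exp_neg_le_q _ _ 8 (by norm_num) (by norm_num) (by norm_num)) (exp_neg_le_q _ _ 64 (by norm_num) (by norm_num) (by norm_num)) (by norm_num)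
            · have hc6' : (269/100) ≤ a := le_of_lt hc6
              rcases le_or_gt Y (69/500) with hc7 | hc7
              · -- Y ≤ (69/500)
                exact core_box a Y (269/100) (169/50) (1/20) (69/500) (-353040637540673558319/1050781250000000000000) (-21236072885302306166233/5281250000000000000000) (19120121611/3125000000) (1161996341/125000000) (562144767/100000000000) (2533429/20000000000) (by linarith) (by linarith) (by linarith) (by linarith) (by norm_num) (by norm_num) (by norm_num) (by norm_num) (by norm_num) (by norm_num) (by norm_num) (by norm_num) (by norm_num) (by norm_num) (by norm_num) (exp_neg_le_q _ _ 16 (by norm_num) (by norm_num) (by norm_num)) (exp_neg_le_q _ _ 128 (by norm_num) (by norm_num) (by norm_num)) (by norm_num)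
              · have hc7' : (69/500) ≤ Y := le_of_lt hc7
                exact core_box a Y (269/100) (169/50) (69/500) (9/40) (-1816964856660319/3443200000000000) (-107322661730250033/17305600000000000) (1161996341/250000000) (33697893889/3125000000) (51236453/2000000000) (27069481/25000000000) (by linarith) (by linarith) (by linarith) (by linarith) (by norm_num) (by norm_num) (by norm_num) (by norm_num) (by norm_num) (by norm_num) (by norm_num) (by norm_num) (by norm_num) (by norm_num) (by norm_num) (exp_neg_le_q _ _ 8 (by norm_num) (by norm_num) (by norm_num)) (exp_neg_le_q _ _ 8 (by norm_num) (by norm_num) (by norm_num)) (by norm_num)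
          · have hc5' : (9/40) ≤ Y := le_of_lt hc5
            rcases le_or_gt a (269/100) with hc6 | hc6
            · -- a ≤ (269/100)
              rcases le_or_gt Y (39/125) with hc7 | hc7
              · -- Y ≤ (39/125)
                rcases le_or_gt a (47/20) with hc8 | hc8
                · -- a ≤ (47/20)
                  rcases le_or_gt Y (67/250) with hc9 | hc9
                  · -- Y ≤ (67/250)
                    exact core_box a Y (2) (47/20) (9/40) (67/250) (-340437420020852047/488281250000000000) (-279080294487472809947/45898437500000000000) (11388271/3906250) (11388271/1250000) (1040671119/12500000000) (73824691/100000000000) (by linarith) (by linarith) (by linarith) (by linarith) (by norm_num) (by norm_num) (by norm_num) (by norm_num) (by norm_num) (by norm_num) (by norm_num) (by norm_num) (by norm_num) (by norm_num) (by norm_num) (exp_neg_le_q _ _ 8 (by norm_num) (by norm_num) (by norm_num)) (exp_neg_le_q _ _ 16 (by norm_num) (by norm_num) (by norm_num)) (by norm_num)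
                  · have hc9' : (67/250) ≤ Y := le_of_lt hc9
                    exact core_box a Y (2) (47/20) (67/250) (39/125) (-5182518043950577/7629394531250000) (-1355116296009389713/179290771484375000) (18456853/7812500) (18849552/1953125) (12618600683/100000000000) (5429193/25000000000) (by linarith) (by linarith) (by linarith) (by linarith) (by norm_num) (by norm_num) (by norm_num) (by norm_num) (by norm_num) (by norm_num) (by norm_num) (by norm_num) (by norm_num) (by norm_num) (by norm_num) (exp_neg_le_q _ _ 8 (by norm_num) (by norm_num) (by norm_num)) (exp_neg_le_q _ _ 32 (by norm_num) (by norm_num) (by norm_num)) (by norm_num)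
                · have hc8' : (47/20) ≤ a := le_of_lt hc8
                  exact core_box a Y (47/20) (269/100) (9/40) (39/125) (-2007676177835963827/2868652343750000000) (-139389542649668576391/16418457031250000000) (867472091/312500000) (535248737/50000000) (7732208369/100000000000) (13785261/50000000000) (by linarith) (by linarith) (by linarith) (by linarith) (by norm_num) (by norm_num) (by norm_num) (by norm_num) (by norm_num) (by norm_num) (by norm_num) (by norm_num) (by norm_num) (by norm_num) (by norm_num) (exp_neg_le_q _ _ 16 (by norm_num) (by norm_num) (by norm_num)) (exp_neg_le_q _ _ 16 (by norm_num) (by norm_num) (by norm_num)) (by norm_num)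
              · have hc7' : (39/125) ≤ Y := le_of_lt hc7
                rcases le_or_gt a (47/20) with hc8 | hc8
                · -- a ≤ (47/20)
                  rcases le_or_gt Y (89/250) with hc9 | hc9
                  · -- Y ≤ (89/250)
                    exact core_box a Y (2) (47/20) (39/125) (89/250) (-77899387207864101/122070312500000000) (-425466317302730189829/45898437500000000000) (3534291/1953125) (79717897/7812500) (688011869/4000000000) (18665397/50000000000) (by linarith) (by linarith) (by linarith) (by linarith) (by norm_num) (by norm_num) (by norm_num) (by norm_num) (by norm_num) (by norm_num) (by norm_num) (by norm_num) (by norm_num) (by norm_num) (by norm_num) (exp_neg_le_q _ _ 32 (by norm_num) (by norm_num) (by norm_num)) (exp_neg_le_q _ _ 16 (by norm_num) (by norm_num) (by norm_num)) (by norm_num)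
                  · have hc9' : (89/250) ≤ Y := le_of_lt hc9
                    rcases le_or_gt a (217/100) with hc10 | hc10
                    · -- a ≤ (217/100)
                      rcases le_or_gt Y (189/500) with hc11 | hc11
                      · -- Y ≤ (189/500)
                        exact core_box a Y (2) (217/100) (89/250) (189/500) (-2094692322534244851/3906250000000000000) (-64596569262108347772769/6781250000000000000000) (23954639/15625000) (42018793/3906250) (24595057241/100000000000) (3422141/3125000000) (by linarith) (by linarith) (by linarith) (by linarith) (by norm_num) (by norm_num) (by norm_num) (by norm_num) (by norm_num) (by norm_num) (by norm_num) (by norm_num) (by norm_num) (by norm_num) (by norm_num) (exp_neg_le_q _ _ 8 (by norm_num) (by norm_num) (by norm_num)) (exp_neg_le_q _ _ 8 (by norm_num) (by norm_num) (by norm_num)) (by norm_num)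
                      · have hc11' : (189/500) ≤ Y := le_of_lt hc11
                        exact core_box a Y (2) (217/100) (189/500) (2/5) (-3205090163/6250000000) (-7135614845567/678125000000) (392699/312500) (172394861/15625000) (3112390677/10000000000) (97411993/100000000000) (by linarith) (by linarith) (by linarith) (by linarith) (by norm_num) (by norm_num) (by norm_num) (by norm_num) (by norm_num) (by norm_num) (by norm_num) (by norm_num) (by norm_num) (by norm_num) (by norm_num) (exp_neg_le_q _ _ 8 (by norm_num) (by norm_num) (by norm_num)) (exp_neg_le_q _ _ 8 (by norm_num) (by norm_num) (by norm_num)) (by norm_num)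
                    · have hc10' : (217/100) ≤ a := le_of_lt hc10
                      exact core_box a Y (217/100) (47/20) (89/250) (2/5) (-1610923827/3027343750) (-1652680411897/146875000000) (85215683/62500000) (9118078081/781250000) (26310458571/100000000000) (780651/5000000000) (by linarith) (by linarith) (by linarith) (by linarith) (by norm_num) (by norm_num) (by norm_num) (by norm_num) (by norm_num) (by norm_num) (by norm_num) (by norm_num) (by norm_num) (by norm_num) (by norm_num) (exp_neg_le_q _ _ 32 (by norm_num) (by norm_num) (by norm_num)) (exp_neg_le_q _ _ 16 (by norm_num) (by norm_num) (by norm_num)) (by norm_num)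
                · have hc8' : (47/20) ≤ a := le_of_lt hc8
                  rcases le_or_gt Y (89/250) with hc9 | hc9
                  · -- Y ≤ (89/250)
                    exact core_box a Y (47/20) (269/100) (39/125) (89/250) (-2965584948769612747/5737304687500000000) (-2594660513924136618383/262695312500000000000) (166111677/78125000) (3746741159/312500000) (15175317281/100000000000) (32905007/50000000000) (by linarith) (by linarith) (by linarith) (by linarith) (by norm_num) (by norm_num) (by norm_num) (by norm_num) (by norm_num) (by norm_num) (by norm_num) (by norm_num) (by norm_num) (by norm_num) (by norm_num) (exp_neg_le_q _ _ 8 (by norm_num) (by norm_num) (by norm_num)) (exp_neg_le_q _ _ 8 (by norm_num) (by norm_num) (by norm_num)) (by norm_num)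
                  · have hc9' : (89/250) ≤ Y := le_of_lt hc9
                    exact core_box a Y (47/20) (269/100) (89/250) (2/5) (-2226011649/4589843750) (-10022608930219/840625000000) (18456853/12500000) (1974883271/156250000) (12896993431/50000000000) (9006017/100000000000) (by linarith) (by linarith) (by linarith) (by linarith) (by norm_num) (by norm_num) (by norm_num) (by norm_num) (by norm_num) (by norm_num) (by norm_num) (by norm_num) (by norm_num) (by norm_num) (by norm_num) (exp_neg_le_q _ _ 8 (by norm_num) (by norm_num) (by norm_num)) (exp_neg_le_q _ _ 16 (by norm_num) (by norm_num) (by norm_num)) (by norm_num)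
            · have hc6' : (269/100) ≤ a := le_of_lt hc6
              rcases le_or_gt Y (39/125) with hc7 | hc7
              · -- Y ≤ (39/125)
                exact core_box a Y (269/100) (169/50) (9/40) (39/125) (-9435484947525001079/16418457031250000000) (-189533550329157253107/20629882812500000000) (4964893457/1562500000) (3063444899/250000000) (6885771063/100000000000) (14811917/25000000000) (by linarith) (by linarith) (by linarith) (by linarith) (by norm_num) (by norm_num) (by norm_num) (by norm_num) (by norm_num) (by norm_num) (by norm_num) (by norm_num) (by norm_num) (by norm_num) (by norm_num) (exp_neg_le_q _ _ 8 (by norm_num) (by norm_num) (by norm_num)) (exp_neg_le_q _ _ 8 (by norm_num) (by norm_num) (by norm_num)) (by norm_num)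
              · have hc7' : (39/125) ≤ Y := le_of_lt hc7
                rcases le_or_gt Y (89/250) with hc8 | hc8
                · -- Y ≤ (89/250)
                  exact core_box a Y (269/100) (169/50) (39/125) (89/250) (-14097456408915443169/32836914062500000000) (-1771531668599178767683/165039062500000000000) (950724279/390625000) (21444114293/1562500000) (11944330217/100000000000) (33819273/100000000000) (by linarith) (by linarith) (by linarith) (by linarith) (by norm_num) (by norm_num) (by norm_num) (by norm_num) (by norm_num) (by norm_num) (by norm_num) (by norm_num) (by norm_num) (by norm_num) (by norm_num) (exp_neg_le_q _ _ 8 (by norm_num) (by norm_num) (by norm_num)) (exp_neg_le_q _ _ 8 (by norm_num) (by norm_num) (by norm_num)) (by norm_num)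
                · have hc8' : (89/250) ≤ Y := le_of_lt hc8
                  exact core_box a Y (269/100) (169/50) (89/250) (2/5) (-10853508773/26269531250) (-6796382025119/528125000000) (105636031/62500000) (11303055317/781250000) (2697592903/12500000000) (25835589/100000000000) (by linarith) (by linarith) (by linarith) (by linarith) (by norm_num) (by norm_num) (by norm_num) (by norm_num) (by norm_num) (by norm_num) (by norm_num) (by norm_num) (by norm_num) (by norm_num) (by norm_num) (exp_neg_le_q _ _ 8 (by norm_num) (by norm_num) (by norm_num)) (exp_neg_le_q _ _ 8 (by norm_num) (by norm_num) (by norm_num)) (by norm_num)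
        · have hc4' : (169/50) ≤ a := le_of_lt hc4
          rcases le_or_gt Y (9/40) with hc5 | hc5
          · -- Y ≤ (9/40)
            rcases le_or_gt Y (69/500) with hc6 | hc6
            · -- Y ≤ (69/500)
              exact core_box a Y (169/50) (19/4) (1/20) (69/500) (-7031705863146213219/660156250000000000000) (-2680746775936353947683/593750000000000000000) (12012269711/1562500000) (730027441/62500000) (457311257/100000000000) (15529309/100000000000) (by linarith) (by linarith) (by linarith) (by linarith) (by norm_num) (by norm_num) (by norm_num) (by norm_num) (by norm_num) (by norm_num) (by norm_num) (by norm_num) (by norm_num) (by norm_num) (by norm_num) (exp_neg_le_q _ _ 8 (by norm_num) (by norm_num) (by norm_num)) (exp_neg_le_q _ _ 16 (by norm_num) (by norm_num) (by norm_num)) (by norm_num)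
            · have hc6' : (69/500) ≤ Y := le_of_lt hc6
              exact core_box a Y (169/50) (19/4) (69/500) (9/40) (-615776183915219/2163200000000000) (-13289239206245483/1945600000000000) (730027441/125000000) (21170795789/1562500000) (623083241/50000000000) (36078881/100000000000) (by linarith) (by linarith) (by linarith) (by linarith) (by norm_num) (by norm_num) (by norm_num) (by norm_num) (by norm_num) (by norm_num) (by norm_num) (by norm_num) (by norm_num) (by norm_num) (by norm_num) (exp_neg_le_q _ _ 8 (by norm_num) (by norm_num) (by norm_num)) (exp_neg_le_q _ _ 8 (by norm_num) (by norm_num) (by norm_num)) (by norm_num)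
          · have hc5' : (9/40) ≤ Y := le_of_lt hc5
            rcases le_or_gt Y (39/125) with hc6 | hc6
            · -- Y ≤ (39/125)
              exact core_box a Y (169/50) (19/4) (9/40) (39/125) (-8211960830637282083/20629882812500000000) (-11563793637566260391/1159667968750000000) (3119208157/781250000) (1924617799/125000000) (3921182323/100000000000) (18683019/100000000000) (by linarith) (by linarith) (by linarith) (by linarith) (by norm_num) (by norm_num) (by norm_num) (by norm_num) (by norm_num) (by norm_num) (by norm_num) (by norm_num) (by norm_num) (by norm_num) (by norm_num) (exp_neg_le_q _ _ 8 (by norm_num) (by norm_num) (by norm_num)) (exp_neg_le_q _ _ 8 (by norm_num) (by norm_num) (by norm_num)) (by norm_num)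
            · have hc6' : (39/125) ≤ Y := le_of_lt hc6
              exact core_box a Y (169/50) (19/4) (39/125) (2/5) (-27030517667/66015625000) (-842589109469/59375000000) (66366131/31250000) (13472324593/781250000) (7602741197/50000000000) (5085637/50000000000) (by linarith) (by linarith) (by linarith) (by linarith) (by norm_num) (by norm_num) (by norm_num) (by norm_num) (by norm_num) (by norm_num) (by norm_num) (by norm_num) (by norm_num) (by norm_num) (by norm_num) (exp_neg_le_q _ _ 8 (by norm_num) (by norm_num) (by norm_num)) (exp_neg_le_q _ _ 8 (by norm_num) (by norm_num) (by norm_num)) (by norm_num)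
      · have hc3' : (19/4) ≤ a := le_of_lt hc3
        rcases le_or_gt Y (9/40) with hc4 | hc4
        · -- Y ≤ (9/40)
          exact core_box a Y (19/4) (15/2) (1/20) (9/40) (-3349361031451/12800000000000) (-781515064931657/102400000000000) (82074091/10000000) (82074091/5000000) (13266207/10000000000) (1241717/100000000000) (by linarith) (by linarith) (by linarith) (by linarith) (by norm_num) (by norm_num) (by norm_num) (by norm_num) (by norm_num) (by norm_num) (by norm_num) (by norm_num) (by norm_num) (by norm_num) (by norm_num) (exp_neg_le_q _ _ 16 (by norm_num) (by norm_num) (by norm_num)) (exp_neg_le_q _ _ 16 (by norm_num) (by norm_num) (by norm_num)) (by norm_num)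
        · have hc4' : (9/40) ≤ Y := le_of_lt hc4
          rcases le_or_gt a (153/25) with hc5 | hc5
          · -- a ≤ (153/25)
            exact core_box a Y (19/4) (153/25) (9/40) (2/5) (-52183898847/118750000000) (-57712136018299/3825000000000) (7461281/2500000) (216377149/10000000) (5232663463/100000000000) (91/80000000) (by linarith) (by linarith) (by linarith) (by linarith) (by norm_num) (by norm_num) (by norm_num) (by norm_num) (by norm_num) (by norm_num) (by norm_num) (by norm_num) (by norm_num) (by norm_num) (by norm_num) (exp_neg_le_q _ _ 128 (by norm_num) (by norm_num) (by norm_num)) (exp_neg_le_q _ _ 16 (by norm_num) (by norm_num) (by norm_num)) (by norm_num)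
          · have hc5' : (153/25) ≤ a := le_of_lt hc5
            exact core_box a Y (153/25) (15/2) (9/40) (2/5) (-1261322430131/3825000000000) (-576168026987/37500000000) (60082947/15625000) (1742405463/62500000) (2164306983/50000000000) (9547/1562500000) (by linarith) (by linarith) (by linarith) (by linarith) (by norm_num) (by norm_num) (by norm_num) (by norm_num) (by norm_num) (by norm_num) (by norm_num) (by norm_num) (by norm_num) (by norm_num) (by norm_num) (exp_neg_le_q _ _ 8 (by norm_num) (by norm_num) (by norm_num)) (exp_neg_le_q _ _ 8 (by norm_num) (by norm_num) (by norm_num)) (by norm_num)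
    · have hc2' : (15/2) ≤ a := le_of_lt hc2
      rcases le_or_gt Y (9/40) with hc3 | hc3
      · -- Y ≤ (9/40)
        exact core_box a Y (15/2) (13) (1/20) (9/40) (0) (-10594345444111541/1331200000000000) (12959067/1000000) (12959067/500000) (45055139/100000000000) (957777/100000000000) (by linarith) (by linarith) (by linarith) (by linarith) (by norm_num) (by norm_num) (by norm_num) (by norm_num) (by norm_num) (by norm_num) (by norm_num) (by norm_num) (by norm_num) (by norm_num) (by norm_num) (exp_neg_le_q _ _ 8 (by norm_num) (by norm_num) (by norm_num)) (exp_neg_le_q _ _ 8 (by norm_num) (by norm_num) (by norm_num)) (by norm_num)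
      · have hc3' : (9/40) ≤ Y := le_of_lt hc3
        exact core_box a Y (15/2) (13) (9/40) (2/5) (-9741852103/37500000000) (-5161963916179/325000000000) (1178097/250000) (34164813/1000000) (1229908443/50000000000) (167927/100000000000) (by linarith) (by linarith) (by linarith) (by linarith) (by norm_num) (by norm_num) (by norm_num) (by norm_num) (by norm_num) (by norm_num) (by norm_num) (by norm_num) (by norm_num) (by norm_num) (by norm_num) (exp_neg_le_q _ _ 8 (by norm_num) (by norm_num) (by norm_num)) (exp_neg_le_q _ _ 8 (by norm_num) (by norm_num) (by norm_num)) (by norm_num)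
  · have hc1' : (13) ≤ a := le_of_lt hc1
    rcases le_or_gt Y (9/40) with hc2 | hc2
    · -- Y ≤ (9/40)
      exact core_box a Y (13) (24) (1/20) (9/40) (0) (-835846264931657/102400000000000) (56155957/2500000) (56155957/1250000) (1131303/50000000000) (3407/12500000000) (by linarith) (by linarith) (by linarith) (by linarith) (by norm_num) (by norm_num) (by norm_num) (by norm_num) (by norm_num) (by norm_num) (by norm_num) (by norm_num) (by norm_num) (by norm_num) (by norm_num) (exp_neg_le_q _ _ 8 (by norm_num) (by norm_num) (by norm_num)) (exp_neg_le_q _ _ 8 (by norm_num) (by norm_num) (by norm_num)) (by norm_num)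
    · have hc2' : (9/40) ≤ Y := le_of_lt hc2
      exact core_box a Y (13) (24) (9/40) (2/5) (-41759983851/325000000000) (-9724211478667/600000000000) (5105087/625000) (148047523/2500000) (359285409/100000000000) (2013/50000000000) (by linarith) (by linarith) (by linarith) (by linarith) (by norm_num) (by norm_num) (by norm_num) (by norm_num) (by norm_num) (by norm_num) (by norm_num) (by norm_num) (by norm_num) (by norm_num) (by norm_num) (exp_neg_le_q _ _ 8 (by norm_num) (by norm_num) (by norm_num)) (exp_neg_le_q _ _ 8 (by norm_num) (by norm_num) (by norm_num)) (by norm_num)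


section Helpers
variable (a Y : ℝ)

lemma S1 (ha1 : 2 ≤ a) (hY1 : 1/20 ≤ Y) (hY2 : Y ≤ 2/5) :
    Summable (fun n : ℕ => (Real.pi * (((n:ℤ):ℝ) - Y)^5 - (5/a) * (((n:ℤ):ℝ) - Y)^3
      - (1/4)*(((n:ℤ):ℝ) - Y)) * Real.exp (-a * Real.pi * (((n:ℤ):ℝ) - Y)^2)) := by
  have ha0 : (0:ℝ) < a := by linarith
  apply Summable.of_norm_bounded_eventually_nat (g := fun n => Real.exp (-1) ^ n)
  · exact summable_geometric_of_lt_one (le_of_lt (Real.exp_pos _))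
      (Real.exp_lt_one_iff.mpr (by norm_num))
  · rw [Filter.eventually_atTop]
    refine ⟨3, fun n hn => ?_⟩
    have hn3 : (3:ℝ) ≤ (n:ℝ) := by exact_mod_cast hn
    set x : ℝ := ((n:ℤ):ℝ) - Y with hx
    clear_value x
    have hxn : x = (n:ℝ) - Y := by rw [hx]; push_cast; ring
    have hx2 : 2 ≤ x := by rw [hxn]; linarith
    have hx0 : 0 < x := by linarith
    have hq0 : (0:ℝ) ≤ 5/a := by positivity
    have hq1 : (5:ℝ)/a ≤ 5/2 := by
      apply div_le_div_of_nonneg_left (by norm_num) (by norm_num) ha1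
    have hE : 3 * x^2 + (n:ℝ) ≤ a * Real.pi * x^2 := by
      have hp := Real.pi_gt_d6
      have hax : (0:ℝ) ≤ a * Real.pi - 6.28 := by
        nlinarith [mul_nonneg (by linarith : (0:ℝ) ≤ a - 2) (by linarith : (0:ℝ) ≤ Real.pi - 3.141592)]
      have h1 : (6.28:ℝ) * x^2 ≤ a * Real.pi * x^2 := by nlinarith [mul_nonneg hax (sq_nonneg x)]
      have h2 : (n:ℝ) ≤ 3.28 * x^2 := by nlinarith
      linarith
    have htb := L_tb x (a * Real.pi * x^2) (n:ℝ) (5/a) hx2 hq0 hq1 hE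
    rw [norm_mul, Real.norm_eq_abs, Real.norm_eq_abs, Real.abs_exp]
    have habs : |Real.pi * x^5 - (5/a) * x^3 - (1/4)*x| ≤ Real.pi * x^5 + (5/a) * x^3 + x/4 := by
      have c1 : 0 ≤ Real.pi * x^5 := by positivity
      have c2 : 0 ≤ (5/a) * x^3 := by positivity
      have c3 : 0 ≤ (1/4) * x := by positivity
      rw [abs_le]; constructor <;> nlinarith
    have hexpeq : Real.exp (-a * Real.pi * x^2) = Real.exp (-(a * Real.pi * x^2)) := by
      congr 1; ring
    have hgoal : |Real.pi * x^5 - (5/a) * x^3 - (1/4)*x| * Real.exp (-a * Real.pi * x^2)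
        ≤ Real.exp (-(n:ℝ)) := by
      rw [hexpeq]
      calc |Real.pi * x^5 - (5/a) * x^3 - (1/4)*x| * Real.exp (-(a * Real.pi * x^2))
          ≤ (Real.pi * x^5 + (5/a) * x^3 + x/4) * Real.exp (-(a * Real.pi * x^2)) := by
            have := Real.exp_pos (-(a * Real.pi * x^2)); nlinarith
        _ ≤ Real.exp (-(n:ℝ)) := htb
    have hrw : Real.exp (-1:ℝ) ^ n = Real.exp (-(n:ℝ)) := by
      rw [← Real.exp_nat_mul]; congr 1; ring
    rw [hrw]; exact hgoal

lemma S2 (ha1 : 2 ≤ a) (hY1 : 1/20 ≤ Y) (hY2 : Y ≤ 2/5) :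
    Summable (fun n : ℕ => (Real.pi * (((-(n+1):ℤ):ℝ) - Y)^5 - (5/a) * (((-(n+1):ℤ):ℝ) - Y)^3
      - (1/4)*(((-(n+1):ℤ):ℝ) - Y)) * Real.exp (-a * Real.pi * (((-(n+1):ℤ):ℝ) - Y)^2)) := by
  have ha0 : (0:ℝ) < a := by linarith
  apply Summable.of_norm_bounded_eventually_nat (g := fun n => Real.exp (-1) ^ n)
  · exact summable_geometric_of_lt_one (le_of_lt (Real.exp_pos _))
      (Real.exp_lt_one_iff.mpr (by norm_num))
  · rw [Filter.eventually_atTop]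
    refine ⟨3, fun n hn => ?_⟩
    have hn3 : (3:ℝ) ≤ (n:ℝ) := by exact_mod_cast hn
    set s : ℝ := (n:ℝ) + 1 + Y with hs
    clear_value s
    have hxn : (((-(n+1):ℤ)):ℝ) - Y = -s := by rw [hs]; push_cast; ring
    have hs2 : 2 ≤ s := by rw [hs]; linarith
    have hs0 : 0 < s := by linarith
    have hq0 : (0:ℝ) ≤ 5/a := by positivity
    have hq1 : (5:ℝ)/a ≤ 5/2 := by
      apply div_le_div_of_nonneg_left (by norm_num) (by norm_num) ha1
    have hE : 3 * s^2 + (n:ℝ) ≤ a * Real.pi * s^2 := by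
      have hp := Real.pi_gt_d6
      have hax : (0:ℝ) ≤ a * Real.pi - 6.28 := by
        nlinarith [mul_nonneg (by linarith : (0:ℝ) ≤ a - 2) (by linarith : (0:ℝ) ≤ Real.pi - 3.141592)]
      have h1 : (6.28:ℝ) * s^2 ≤ a * Real.pi * s^2 := by nlinarith [mul_nonneg hax (sq_nonneg s)]
      have h2 : (n:ℝ) ≤ 3.28 * s^2 := by nlinarith
      linarith
    have htb := L_tb s (a * Real.pi * s^2) (n:ℝ) (5/a) hs2 hq0 hq1 hE
    rw [hxn, norm_mul, Real.norm_eq_abs, Real.norm_eq_abs, Real.abs_exp]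
    have hpoly : Real.pi * (-s)^5 - (5/a) * (-s)^3 - (1/4)*(-s)
        = -(Real.pi * s^5) + (5/a) * s^3 + s/4 := by ring
    have habs : |Real.pi * (-s)^5 - (5/a) * (-s)^3 - (1/4)*(-s)| ≤ Real.pi * s^5 + (5/a) * s^3 + s/4 := by
      rw [hpoly]
      have c1 : 0 ≤ Real.pi * s^5 := by positivity
      have c2 : 0 ≤ (5/a) * s^3 := by positivity
      have c3 : 0 ≤ (1/4) * s := by positivity
      rw [abs_le]; constructor <;> nlinarith
    have hexpeq : Real.exp (-a * Real.pi * (-s)^2) = Real.exp (-(a * Real.pi * s^2)) := by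
      congr 1; ring
    have hrw : Real.exp (-1:ℝ) ^ n = Real.exp (-(n:ℝ)) := by
      rw [← Real.exp_nat_mul]; congr 1; ring
    rw [hrw, hexpeq]
    calc |Real.pi * (-s)^5 - (5/a) * (-s)^3 - (1/4)*(-s)| * Real.exp (-(a * Real.pi * s^2))
        ≤ (Real.pi * s^5 + (5/a) * s^3 + s/4) * Real.exp (-(a * Real.pi * s^2)) := by
          have := Real.exp_pos (-(a * Real.pi * s^2)); nlinarith
      _ ≤ Real.exp (-(n:ℝ)) := htb

end Helpers

noncomputable def Fsum (a Y : ℝ) : ℝ :=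
  ∑' n : ℤ, (Real.pi * ((n : ℝ) - Y)^5 - (5 / a) * ((n : ℝ) - Y)^3 - (1/4) * ((n : ℝ) - Y)) *
    Real.exp (-a * Real.pi * ((n : ℝ) - Y)^2)

theorem Fsum_pos_middle (a Y : ℝ) (ha1 : 2 ≤ a) (ha2 : a ≤ 24)
    (hY1 : 1/20 ≤ Y) (hY2 : Y ≤ 2/5) :
    (1/100) * Real.exp (-a * Real.pi * Y^2) ≤ Fsum a Y ∧
      0 < (1/100) * Real.exp (-a * Real.pi * Y^2) := by
  have ha0 : (0:ℝ) < a := by linarith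
  have hpi := Real.pi_pos
  have hp1 : (3.141592:ℝ) < Real.pi := Real.pi_gt_d6
  refine ⟨?_, by positivity⟩
  set g : ℤ → ℝ := fun n => (Real.pi * ((n : ℝ) - Y)^5 - (5 / a) * ((n : ℝ) - Y)^3
    - (1/4) * ((n : ℝ) - Y)) * Real.exp (-a * Real.pi * ((n : ℝ) - Y)^2) with hg
  set C : ℝ := Real.exp (-a * Real.pi * Y^2) with hC
  have hCpos : 0 < C := Real.exp_pos _
  have hq1 : (5:ℝ)/a ≤ 5/2 := by
    apply div_le_div_of_nonneg_left (by norm_num) (by norm_num) ha1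
  have hq0 : (0:ℝ) ≤ 5/a := by positivity
  have hS1 : Summable (fun n : ℕ => g n) := S1 a Y ha1 hY1 hY2
  have hS2 : Summable (fun n : ℕ => g (-(n+1))) := S2 a Y ha1 hY1 hY2
  have hFs : Fsum a Y = (∑' n : ℕ, g n) + ∑' n : ℕ, g (-(n+1)) := by
    rw [Fsum]
    exact tsum_of_nat_of_neg_add_one hS1 hS2
  -- positive side
  have hpos : ∀ n : ℕ, n ∉ ({0, 1} : Finset ℕ) → 0 ≤ g n := by
    intro n hn
    have hn2 : 2 ≤ n := by
      simp only [Finset.mem_insert, Finset.mem_singleton] at hn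
      omega
    have hn2' : (2:ℝ) ≤ (n:ℝ) := by exact_mod_cast hn2
    simp only [hg]
    have hx : ((n:ℤ):ℝ) - Y = (n:ℝ) - Y := by push_cast; ring
    rw [hx]
    set x : ℝ := (n:ℝ) - Y with hxd
    clear_value x
    have hx16 : (8/5 : ℝ) ≤ x := by rw [hxd]; linarith
    have hx0 : (0:ℝ) < x := by linarith
    apply mul_nonneg _ (le_of_lt (Real.exp_pos _))
    have h1 : (5/a) * x^3 ≤ (5/2) * x^3 := by nlinarith [pow_pos hx0 3]
    nlinarith [pow_pos hx0 5, pow_pos hx0 3, pow_pos hx0 1,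
      mul_le_mul_of_nonneg_right (show (64/25:ℝ) ≤ x^2 by nlinarith) (le_of_lt (pow_pos hx0 3))]
  have hA : g 0 + g 1 ≤ ∑' n : ℕ, g n := by
    have h := Summable.sum_le_tsum ({0, 1} : Finset ℕ) hpos hS1
    have : ∑ i ∈ ({0, 1} : Finset ℕ), g i = g 0 + g 1 := by
      rw [Finset.sum_pair (by norm_num)]
      norm_num
    rw [this] at h
    exact_mod_cast h
  -- tail bound
  have htail : ∀ n : ℕ, -(C * Real.exp (-(5 * ((n:ℝ) + 2)))) ≤ g (-(n+1+1)) := by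
    intro n
    simp only [hg]
    have hx : ((-((n:ℕ)+1+1):ℤ):ℝ) - Y = -((n:ℝ) + 2 + Y) := by push_cast; ring
    rw [hx]
    set t : ℝ := (n:ℝ) + 2 with htd
    clear_value t
    have ht2 : (2:ℝ) ≤ t := by
      rw [htd]; have hnn : (0:ℝ) ≤ (n:ℝ) := Nat.cast_nonneg n; linarith
    set s : ℝ := t + Y with hsd
    clear_value s
    have hs2 : (2:ℝ) ≤ s := by rw [hsd]; linarith
    have hs0 : (0:ℝ) < s := by linarith
    have hE : 3 * s^2 + (a * Real.pi * Y^2 + 5 * t) ≤ a * Real.pi * s^2 := by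
      have hax : (0:ℝ) ≤ a * Real.pi - 6.28 := by
        nlinarith [mul_nonneg (by linarith : (0:ℝ) ≤ a - 2) (by linarith : (0:ℝ) ≤ Real.pi - 3.141592)]
      have hsY : (0:ℝ) ≤ s^2 - Y^2 := by nlinarith
      have h1 : 6.28 * (s^2 - Y^2) ≤ a * Real.pi * (s^2 - Y^2) := by
        nlinarith [mul_nonneg hax hsY]
      have h2 : 3 * s^2 + 5 * t + 6.28 * Y^2 ≤ 6.28 * s^2 := by nlinarith [sq_nonneg (s - t)]
      nlinarith
    have htb := L_tb s (a * Real.pi * s^2) (a * Real.pi * Y^2 + 5 * t) 0 hs2 le_rfl (by norm_num) hE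
    have hsplit : Real.exp (-(a * Real.pi * Y^2 + 5 * t)) = C * Real.exp (-(5 * t)) := by
      rw [hC, ← Real.exp_add]; congr 1; ring
    rw [hsplit] at htb
    have hexpeq : Real.exp (-a * Real.pi * (-s)^2) = Real.exp (-(a * Real.pi * s^2)) := by
      congr 1; ring
    rw [hexpeq]
    have hEp := Real.exp_pos (-(a * Real.pi * s^2))
    have hpoly : Real.pi * (-s)^5 - (5/a) * (-s)^3 - (1/4) * (-s)
        = -(Real.pi * s^5) + (5/a) * s^3 + s/4 := by ring
    rw [hpoly]
    have h3 : Real.pi * s^5 * Real.exp (-(a * Real.pi * s^2)) ≤ C * Real.exp (-(5 * t)) := by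
      calc Real.pi * s^5 * Real.exp (-(a * Real.pi * s^2))
          ≤ (Real.pi * s^5 + 0 * s^3 + s/4) * Real.exp (-(a * Real.pi * s^2)) := by nlinarith
        _ ≤ C * Real.exp (-(5 * t)) := htb
    nlinarith [mul_nonneg (mul_nonneg hq0 (le_of_lt (pow_pos hs0 3))) hEp.le,
      mul_nonneg (by linarith : (0:ℝ) ≤ s/4) hEp.le]
  -- geometric bound
  have hgeo : -(0.0001 * C) ≤ ∑' n : ℕ, -(C * Real.exp (-(5 * ((n:ℝ) + 2)))) := by
    have hrw : ∀ n : ℕ, -(C * Real.exp (-(5 * ((n:ℝ) + 2)))) = (-(C * Real.exp (-10))) * Real.exp (-5) ^ n := by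
      intro n
      have h2 : Real.exp (-(5 * ((n:ℝ) + 2))) = Real.exp (-10) * Real.exp (-5:ℝ)^n := by
        rw [← Real.exp_nat_mul, ← Real.exp_add]; congr 1; ring
      rw [h2]; ring
    have hsum : ∑' n : ℕ, -(C * Real.exp (-(5 * ((n:ℝ) + 2))))
        = (-(C * Real.exp (-10))) * (1 - Real.exp (-5))⁻¹ := by
      rw [tsum_congr hrw, tsum_mul_left, tsum_geometric_of_lt_one (le_of_lt (Real.exp_pos _))
        (Real.exp_lt_one_iff.mpr (by norm_num))]
    rw [hsum]
    have he5 : Real.exp (-5) ≤ 0.01 := exp_neg_le_q 5 0.01 64 (by norm_num) (by norm_num) (by norm_num)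
    have he10 : Real.exp (-10) ≤ 0.000096 := exp_neg_le_q 10 0.000096 128 (by norm_num) (by norm_num) (by norm_num)
    have h5p := Real.exp_pos (-5:ℝ)
    have h10p := Real.exp_pos (-10:ℝ)
    have hden : (0.99:ℝ) ≤ 1 - Real.exp (-5) := by linarith
    have hinv : (1 - Real.exp (-5))⁻¹ ≤ 0.99⁻¹ := by
      apply inv_anti₀ (by norm_num) hden
    have hinvpos : (0:ℝ) < (1 - Real.exp (-5))⁻¹ := by positivity
    have : C * Real.exp (-10) * (1 - Real.exp (-5))⁻¹ ≤ C * (0.000096 * 0.99⁻¹) := by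
      have h1 : Real.exp (-10) * (1 - Real.exp (-5))⁻¹ ≤ 0.000096 * 0.99⁻¹ := by
        apply mul_le_mul he10 hinv (le_of_lt hinvpos) (by norm_num)
      nlinarith
    nlinarith
  have hsummgeo : Summable (fun n : ℕ => -(C * Real.exp (-(5 * ((n:ℝ) + 2))))) := by
    have hrw : ∀ n : ℕ, -(C * Real.exp (-(5 * ((n:ℝ) + 2)))) = (-(C * Real.exp (-10))) * Real.exp (-5) ^ n := by
      intro n
      have h2 : Real.exp (-(5 * ((n:ℝ) + 2))) = Real.exp (-10) * Real.exp (-5:ℝ)^n := by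
        rw [← Real.exp_nat_mul, ← Real.exp_add]; congr 1; ring
      rw [h2]; ring
    rw [funext hrw]
    exact (summable_geometric_of_lt_one (le_of_lt (Real.exp_pos _))
      (Real.exp_lt_one_iff.mpr (by norm_num))).mul_left _
  have hB : g (-(0+1)) + -(0.0001 * C) ≤ ∑' n : ℕ, g (-(n+1)) := by
    rw [Summable.tsum_eq_zero_add hS2]
    have hs' : Summable (fun n : ℕ => g (-(n+1+1))) := by
      have := (summable_nat_add_iff 1).mpr hS2
      simpa using this
    have h2 : ∑' n : ℕ, -(C * Real.exp (-(5 * ((n:ℝ) + 2)))) ≤ ∑' n : ℕ, g (-(n+1+1)) :=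
      Summable.tsum_le_tsum htail hsummgeo hs'
    have : -(0.0001 * C) ≤ ∑' n : ℕ, g (-(n+1+1)) := le_trans hgeo h2
    push_cast
    push_cast at this
    linarith
  -- core
  have hcore := core_ineq a Y ha1 ha2 hY1 hY2
  have hval : g 0 + g 1 + g (-(0+1)) = C * ((Y/4 + (5/a)*Y^3 - Real.pi*Y^5)
      + (Real.pi*(1-Y)^5 - (5/a)*(1-Y)^3 - (1-Y)/4) * Real.exp (-(a*Real.pi*(1-2*Y)))
      + (-(Real.pi*(1+Y)^5) + (5/a)*(1+Y)^3 + (1+Y)/4) * Real.exp (-(a*Real.pi*(1+2*Y)))) := by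
    simp only [hg]
    have c0 : (((0:ℤ)):ℝ) - Y = 0 - Y := by norm_num
    have c1 : (((1:ℤ)):ℝ) - Y = 1 - Y := by norm_num
    have cm1 : (((-(0+1):ℤ)):ℝ) - Y = -1 - Y := by norm_num
    rw [c0, c1, cm1]
    have e0 : Real.exp (-a * Real.pi * (0 - Y)^2) = C := by rw [hC]; congr 1; ring
    have e1 : Real.exp (-a * Real.pi * (1 - Y)^2) = C * Real.exp (-(a*Real.pi*(1-2*Y))) := by
      rw [hC, ← Real.exp_add]; congr 1; ring
    have em1 : Real.exp (-a * Real.pi * (-1 - Y)^2) = C * Real.exp (-(a*Real.pi*(1+2*Y))) := by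
      rw [hC, ← Real.exp_add]; congr 1; ring
    rw [e0, e1, em1]
    ring
  have hcoreC : 0.0101 * C ≤ g 0 + g 1 + g (-(0+1)) := by
    rw [hval, mul_comm C]
    exact mul_le_mul_of_nonneg_right hcore hCpos.le
  rw [hFs]
  have : (1:ℝ)/100 * C ≤ (g 0 + g 1) + (g (-(0+1)) + -(0.0001 * C)) := by linarith
  linarith
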